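/- Let G be a group, μ a unitary character of G, δ > 0, and f, g : G → ℂ with |f(xy) + μ(y) f(xy⁻¹) - 2 f(x) g(y)| ≤ δ for all x, y ∈ G. If f is unbounded, then g satisfies the long d'Alembert equation g(xy) + μ(y) g(xy⁻¹) + g(yx) + μ(y) g(y⁻¹x) = 4 g(x) g(y) for all x, y ∈ G. -/

import Mathlib

theorem aux_abs10 (a b c d e f p q r s : ℂ) :
    ‖a + b + c + d + e + f - p - q - r - s‖ ≤
      ‖a‖ + ‖b‖ + ‖c‖ + ‖d‖ + ‖e‖ +
      ‖f‖ + ‖p‖ + ‖q‖ + ‖r‖ + ‖s‖ := by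
  have tri : ∀ u v : ℂ, ‖u - v‖ ≤ ‖u‖ + ‖v‖ := fun u v => by
    simpa [sub_eq_add_neg] using norm_add_le u (-v)
  have h1 := tri (a + b + c + d + e + f - p - q - r) s
  have h2 := tri (a + b + c + d + e + f - p - q) r
  have h3 := tri (a + b + c + d + e + f - p) q
  have h4 := tri (a + b + c + d + e + f) p
  have h5 := norm_add_le (a + b + c + d + e) f
  have h6 := norm_add_le (a + b + c + d) e
  have h7 := norm_add_le (a + b + c) d
  have h8 := norm_add_le (a + b) c
  have h9 := norm_add_le a b
  linarith

theorem stmt_14 {G : Type*} [Group G] (μ f g : G → ℂ) (δ : ℝ) (hδ : 0 < δ)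
    (hμ : ∀ x y, μ (x * y) = μ x * μ y) (hμ1 : ∀ x, ‖μ x‖ = 1)
    (hfg : ∀ x y, ‖f (x * y) + μ y * f (x * y⁻¹) - 2 * f x * g y‖ ≤ δ)
    (hf : ¬ ∃ C : ℝ, ∀ x, ‖f x‖ ≤ C) :
    ∀ x y, g (x * y) + μ y * g (x * y⁻¹) + g (y * x) + μ y * g (y⁻¹ * x)
      = 4 * g x * g y := by
  have hne : ∀ t, μ t ≠ 0 := by
    intro t h
    have := hμ1 t
    rw [h] at this
    simp at this
  have hμ1' : μ 1 = 1 := by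
    have h := hμ 1 1
    rw [one_mul] at h
    have := hne 1
    field_simp at h
    exact h.symm
  have hμinv : ∀ t, μ t⁻¹ = (μ t)⁻¹ := by
    intro t
    have h := hμ t t⁻¹
    rw [mul_inv_cancel, hμ1'] at h
    exact (inv_eq_of_mul_eq_one_right h.symm).symm
  have tri : ∀ u v : ℂ, ‖u - v‖ ≤ ‖u‖ + ‖v‖ := by
    intro u v
    simpa [sub_eq_add_neg] using norm_add_le u (-v)
  intro x y
  have habs : ∀ z, ‖2 * f z *
      (g (x*y) + μ y * g (x*y⁻¹) + g (y*x) + μ y * g (y⁻¹*x) - 4 * g x * g y)‖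
      ≤ (8 + 2 * ‖g x‖ + 2 * ‖g y‖) * δ := by
    intro z
    have key : 2 * f z * (g (x*y) + μ y * g (x*y⁻¹) + g (y*x) + μ y * g (y⁻¹*x) - 4 * g x * g y)
      = 2 * g y * (f (z*x) + μ x * f (z*x⁻¹) - 2 * f z * g x)
      + (f (z*x*y) + μ y * f (z*x*y⁻¹) - 2 * f (z*x) * g y)
      + μ x * (f (z*x⁻¹*y) + μ y * f (z*x⁻¹*y⁻¹) - 2 * f (z*x⁻¹) * g y)
      + 2 * g x * (f (z*y) + μ y * f (z*y⁻¹) - 2 * f z * g y)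
      + (f (z*y*x) + μ x * f (z*y*x⁻¹) - 2 * f (z*y) * g x)
      + μ y * (f (z*y⁻¹*x) + μ x * f (z*y⁻¹*x⁻¹) - 2 * f (z*y⁻¹) * g x)
      - (f (z*(x*y)) + μ (x*y) * f (z*(x*y)⁻¹) - 2 * f z * g (x*y))
      - μ y * (f (z*(x*y⁻¹)) + μ (x*y⁻¹) * f (z*(x*y⁻¹)⁻¹) - 2 * f z * g (x*y⁻¹))
      - (f (z*(y*x)) + μ (y*x) * f (z*(y*x)⁻¹) - 2 * f z * g (y*x))
      - μ y * (f (z*(y⁻¹*x)) + μ (y⁻¹*x) * f (z*(y⁻¹*x)⁻¹) - 2 * f z * g (y⁻¹*x)) := by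
      have hx := hne x
      have hy := hne y
      simp only [hμ, hμinv, mul_inv_rev, inv_inv, mul_assoc]
      field_simp
      ring
    rw [key]
    have t1 : ‖2 * g y * (f (z*x) + μ x * f (z*x⁻¹) - 2 * f z * g x)‖
        ≤ 2 * ‖g y‖ * δ := by
      rw [norm_mul, norm_mul, Complex.norm_two]
      exact mul_le_mul_of_nonneg_left (hfg z x) (by positivity)
    have t2 := hfg (z*x) y
    have t3 : ‖μ x * (f (z*x⁻¹*y) + μ y * f (z*x⁻¹*y⁻¹) - 2 * f (z*x⁻¹) * g y)‖ ≤ δ := by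
      rw [norm_mul, hμ1]
      simpa using hfg (z*x⁻¹) y
    have t4 : ‖2 * g x * (f (z*y) + μ y * f (z*y⁻¹) - 2 * f z * g y)‖
        ≤ 2 * ‖g x‖ * δ := by
      rw [norm_mul, norm_mul, Complex.norm_two]
      exact mul_le_mul_of_nonneg_left (hfg z y) (by positivity)
    have t5 := hfg (z*y) x
    have t6 : ‖μ y * (f (z*y⁻¹*x) + μ x * f (z*y⁻¹*x⁻¹) - 2 * f (z*y⁻¹) * g x)‖ ≤ δ := by
      rw [norm_mul, hμ1]
      simpa using hfg (z*y⁻¹) x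
    have t7 := hfg z (x*y)
    have t8 : ‖μ y * (f (z*(x*y⁻¹)) + μ (x*y⁻¹) * f (z*(x*y⁻¹)⁻¹) - 2 * f z * g (x*y⁻¹))‖ ≤ δ := by
      rw [norm_mul, hμ1]
      simpa using hfg z (x*y⁻¹)
    have t9 := hfg z (y*x)
    have t10 : ‖μ y * (f (z*(y⁻¹*x)) + μ (y⁻¹*x) * f (z*(y⁻¹*x)⁻¹) - 2 * f z * g (y⁻¹*x))‖ ≤ δ := by
      rw [norm_mul, hμ1]
      simpa using hfg z (y⁻¹*x)
    have hten := aux_abs10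
      (2 * g y * (f (z*x) + μ x * f (z*x⁻¹) - 2 * f z * g x))
      (f (z*x*y) + μ y * f (z*x*y⁻¹) - 2 * f (z*x) * g y)
      (μ x * (f (z*x⁻¹*y) + μ y * f (z*x⁻¹*y⁻¹) - 2 * f (z*x⁻¹) * g y))
      (2 * g x * (f (z*y) + μ y * f (z*y⁻¹) - 2 * f z * g y))
      (f (z*y*x) + μ x * f (z*y*x⁻¹) - 2 * f (z*y) * g x)
      (μ y * (f (z*y⁻¹*x) + μ x * f (z*y⁻¹*x⁻¹) - 2 * f (z*y⁻¹) * g x))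
      (f (z*(x*y)) + μ (x*y) * f (z*(x*y)⁻¹) - 2 * f z * g (x*y))
      (μ y * (f (z*(x*y⁻¹)) + μ (x*y⁻¹) * f (z*(x*y⁻¹)⁻¹) - 2 * f z * g (x*y⁻¹)))
      (f (z*(y*x)) + μ (y*x) * f (z*(y*x)⁻¹) - 2 * f z * g (y*x))
      (μ y * (f (z*(y⁻¹*x)) + μ (y⁻¹*x) * f (z*(y⁻¹*x)⁻¹) - 2 * f z * g (y⁻¹*x)))
    refine hten.trans ?_
    nlinarith [t1, t2, t3, t4, t5, t6, t7, t8, t9, t10]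
  by_contra hne'
  have hDne : g (x*y) + μ y * g (x*y⁻¹) + g (y*x) + μ y * g (y⁻¹*x) - 4 * g x * g y ≠ 0 := by
    intro h
    exact hne' (by linear_combination h)
  set Dv := g (x*y) + μ y * g (x*y⁻¹) + g (y*x) + μ y * g (y⁻¹*x) - 4 * g x * g y with hDv
  have hDpos : 0 < ‖Dv‖ := norm_pos_iff.mpr hDne
  apply hf
  refine ⟨((8 + 2 * ‖g x‖ + 2 * ‖g y‖) * δ) / (2 * ‖Dv‖), fun z => ?_⟩
  have h1 := habs z
  rw [norm_mul, norm_mul, Complex.norm_two] at h1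
  rw [le_div_iff₀ (by positivity)]
  nlinarith [h1]
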